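/- Energy equipartition for bandlimited signals (Proposition 1): under the same hypotheses ([U_R, J U_R]ᵀ Q [U_R, J U_R] = I with Q = diag(Q_S, Q_Sc)), every x in the column span of U_R satisfies ‖x_S‖_{Q_S}² = ‖x_Sc‖_{Q_Sc}² = (1/2)‖x‖_Q². -/

import Mathlib

open Matrix

/-- The diagonal ±1 matrix: +1 on `S` (left summand), −1 on `Sᶜ` (right summand). -/
def Jmat (s t : ℕ) : Matrix (Fin s ⊕ Fin t) (Fin s ⊕ Fin t) ℝ :=
  Matrix.fromBlocks 1 0 0 (-1)

/-- Energy equipartition for bandlimited signals: if `[U_R, J U_R]` has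
`Q`-orthonormal columns with `Q = diag(Q_S, Q_Sc)`, then every `x` in the column
span of `U_R` satisfies `‖x_S‖_{Q_S}² = ‖x_Sc‖_{Q_Sc}² = (1/2) ‖x‖_Q²`. -/
theorem stmt_9 {s t r : ℕ} (QS : Matrix (Fin s) (Fin s) ℝ) (QSc : Matrix (Fin t) (Fin t) ℝ)
    (hQ : (Matrix.fromBlocks QS 0 0 QSc).PosDef)
    (UR : Matrix (Fin s ⊕ Fin t) (Fin r) ℝ)
    (horth : (Matrix.fromCols UR (Jmat s t * UR))ᵀ * Matrix.fromBlocks QS 0 0 QSc *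
        Matrix.fromCols UR (Jmat s t * UR) = 1) :
    ∀ x : Fin s ⊕ Fin t → ℝ, (∃ c : Fin r → ℝ, x = UR *ᵥ c) →
      (x ∘ Sum.inl) ⬝ᵥ (QS *ᵥ (x ∘ Sum.inl)) = (x ∘ Sum.inr) ⬝ᵥ (QSc *ᵥ (x ∘ Sum.inr)) ∧
      (x ∘ Sum.inl) ⬝ᵥ (QS *ᵥ (x ∘ Sum.inl)) =
        (1 / 2) * (x ⬝ᵥ (Matrix.fromBlocks QS 0 0 QSc *ᵥ x)) := by
  set M := Matrix.fromCols UR (Jmat s t * UR) with hM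
  set Q := Matrix.fromBlocks QS 0 0 QSc with hQdef
  have key : ∀ v : Fin r ⊕ Fin r → ℝ,
      (M *ᵥ v) ⬝ᵥ (Q *ᵥ (M *ᵥ v)) = v ⬝ᵥ v := by
    intro v
    have h := congrArg (fun A => v ⬝ᵥ (A *ᵥ v)) horth
    simp only [← Matrix.mulVec_mulVec, Matrix.one_mulVec] at h
    rw [Matrix.dotProduct_mulVec, Matrix.vecMul_transpose] at h
    exact h
  rintro x ⟨c, hx⟩
  set a := x ∘ Sum.inl with ha
  set b := x ∘ Sum.inr with hb
  have hxe : x = Sum.elim a b := by funext i; cases i <;> rfl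
  have hJx : Jmat s t *ᵥ x = Sum.elim a (-b) := by
    rw [hxe, Jmat, Matrix.fromBlocks_mulVec]
    simp [Matrix.neg_mulVec]
  have hM1 : M *ᵥ Sum.elim c (0 : Fin r → ℝ) = x := by
    rw [hM, Matrix.fromCols_mulVec_sumElim, ← Matrix.mulVec_mulVec, ← hx]
    simp
  have hM2 : M *ᵥ Sum.elim c c = Sum.elim (a + a) (0 : Fin t → ℝ) := by
    rw [hM, Matrix.fromCols_mulVec_sumElim, ← Matrix.mulVec_mulVec, ← hx, hJx, hxe]
    funext i; cases i <;> simp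
  have hQx : ∀ u : Fin s → ℝ, ∀ w : Fin t → ℝ,
      (Sum.elim u w) ⬝ᵥ (Q *ᵥ Sum.elim u w) = u ⬝ᵥ (QS *ᵥ u) + w ⬝ᵥ (QSc *ᵥ w) := by
    intro u w
    rw [hQdef, Matrix.fromBlocks_mulVec]
    simp [sumElim_dotProduct_sumElim]
  have e1 := key (Sum.elim c (0 : Fin r → ℝ))
  rw [hM1] at e1
  rw [hxe, hQx] at e1
  simp at e1
  have e3 := key (Sum.elim c c)
  rw [hM2, hQx] at e3
  rw [sumElim_dotProduct_sumElim] at e3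
  simp only [Matrix.mulVec_add, dotProduct_add, add_dotProduct,
    Matrix.mulVec_zero, dotProduct_zero, zero_dotProduct, add_zero] at e3
  have hgoal2 : x ⬝ᵥ (Q *ᵥ x) = a ⬝ᵥ (QS *ᵥ a) + b ⬝ᵥ (QSc *ᵥ b) := by
    rw [hxe, hQx]
  constructor
  · linarith
  · rw [hgoal2]; linarith
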